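/- Let 𝔯 be a totally real subspace of E, let T ∈ 𝔯, let W ∈ E be orthogonal to ℂ𝔯 = 𝔯 + J𝔯, and let b, y ∈ ℝ. Then exp(ad(bB+JT+W+yZ))(𝔯) = exp(ad(ρ(b/2)JT))(𝔯) as subspaces of 𝔰. -/

import Mathlib

open scoped RealInnerProductSpace

noncomputable section

namespace CHn

/-- `E n` is `ℂ^{n-1}`, viewed as a real inner product space with `⟪U,V⟫ = Re⟪U,V⟫_ℂ`
and complex structure `JU = iU`. -/
abbrev E (n : ℕ) := EuclideanSpace ℂ (Fin (n - 1))

/-- The solvable part `𝔰 = 𝔞 ⊕ 𝔫` of the Iwasawa decomposition of `𝔰𝔲(1,n)`, modeled as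
`ℝB ⊕ E ⊕ ℝZ`; the element `(a, U, x)` represents `aB + U + xZ`. -/
abbrev S (n : ℕ) := ℝ × E n × ℝ

variable (n : ℕ)

/-- The vector `B`. -/
def B : S n := (1, 0, 0)

/-- The vector `Z`. -/
def Z : S n := (0, 0, 1)

/-- The inner product of `𝔰` (`B`, `Z` unit, orthogonal direct sum `ℝB ⊕ E ⊕ ℝZ`). -/
def sInner (X Y : S n) : ℝ := X.1 * Y.1 + ⟪X.2.1, Y.2.1⟫ + X.2.2 * Y.2.2

/-- The ambient complex structure on `𝔰`: `J(aB + U + xZ) = -xB + JU + aZ`. -/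
def Js : S n →ₗ[ℝ] S n where
  toFun X := (-X.2.2, Complex.I • X.2.1, X.1)
  map_add' X Y := by
    refine Prod.ext ?_ (Prod.ext ?_ ?_)
    · simp; ring
    · simp [smul_add]
    · simp
  map_smul' c X := by
    refine Prod.ext ?_ (Prod.ext ?_ ?_)
    · simp only [Prod.smul_fst, Prod.smul_snd, smul_eq_mul, RingHom.id_apply]; ring
    · simp [Prod.smul_fst, Prod.smul_snd, smul_comm c Complex.I]
    · simp

/-- The Lie bracket of `𝔰`:
`[aB + U + xZ, bB + V + yZ] = (1/2)(aV - bU) + (ay - bx + ⟪JU, V⟫)Z`. -/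
def bra (X Y : S n) : S n :=
  (0, (2⁻¹ : ℝ) • (X.1 • Y.2.1 - Y.1 • X.2.1),
    X.1 * Y.2.2 - Y.1 * X.2.2 + ⟪Complex.I • X.2.1, Y.2.1⟫)

/-- `ad(X) = [X, ·]`, a (continuous) linear endomorphism of `𝔰`. -/
def ad (X : S n) : S n →L[ℝ] S n :=
  LinearMap.toContinuousLinearMap
    { toFun := bra n X
      map_add' := fun Y Y' => by
        unfold bra
        refine Prod.ext ?_ (Prod.ext ?_ ?_)
        · simp
        · simp only [Prod.fst_add, Prod.snd_add]
          module
        · simp only [Prod.fst_add, Prod.snd_add, inner_add_right]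
          ring
      map_smul' := fun c Y => by
        unfold bra
        have h : ⟪Complex.I • X.2.1, c • Y.2.1⟫ = c * ⟪Complex.I • X.2.1, Y.2.1⟫ :=
          real_inner_smul_right _ _ _
        refine Prod.ext ?_ (Prod.ext ?_ ?_)
        · simp
        · simp only [Prod.smul_fst, Prod.smul_snd, smul_eq_mul, RingHom.id_apply]
          module
        · simp only [Prod.smul_fst, Prod.smul_snd, smul_eq_mul, h, RingHom.id_apply]
          ring }

/-- `exp(ad(X)) = Σ_{k ≥ 0} ad(X)^k / k!`. -/
def expAd (X : S n) : S n →L[ℝ] S n := NormedSpace.exp (ad n X)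

/-- `ρ(t) = (e^t - 1)/t` for `t ≠ 0`, `ρ(0) = 1`. -/
def rho (t : ℝ) : ℝ := if t = 0 then 1 else (Real.exp t - 1) / t

/-- The Iwasawa group `AN`, modeled as `G = ℝ × E × ℝ`. -/
abbrev G (n : ℕ) := ℝ × E n × ℝ

/-- The product of `G`:
`(a,P,p)·(b,Q,q) = (a+b, P + e^{a/2}Q, p + e^a q + (1/2)e^{a/2}⟪JP,Q⟫)`. -/
def gmul (g h : G n) : G n :=
  (g.1 + h.1, g.2.1 + Real.exp (g.1 / 2) • h.2.1,
    g.2.2 + Real.exp g.1 * h.2.2 + 2⁻¹ * Real.exp (g.1 / 2) * ⟪Complex.I • g.2.1, h.2.1⟫)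

/-- The Lie exponential `Exp : 𝔰 → G`, `Exp(cB + W + zZ) = (c, ρ(c/2)W, ρ(c)z)`. -/
def Exp (X : S n) : G n := (X.1, rho (X.1 / 2) • X.2.1, rho X.1 * X.2.2)

/-- The inclusion of `E` into `𝔰`. -/
def inE : E n →ₗ[ℝ] S n where
  toFun U := (0, U, 0)
  map_add' U V := by refine Prod.ext ?_ (Prod.ext ?_ ?_) <;> simp
  map_smul' c U := by refine Prod.ext ?_ (Prod.ext ?_ ?_) <;> simp

/-- A real subspace of `E` is totally real if `⟪Ju, v⟫ = 0` for all its elements. -/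
def TotallyRealE (V : Submodule ℝ (E n)) : Prop :=
  ∀ u ∈ V, ∀ v ∈ V, ⟪Complex.I • u, v⟫ = 0

/-- A real subspace of `E` is complex if it is `J`-invariant. -/
def IsComplexE (V : Submodule ℝ (E n)) : Prop :=
  ∀ u ∈ V, Complex.I • u ∈ V

/-- The maximal complex subspace `V ∩ JV` of a real subspace `V` of `E`. -/
def maxCE (V : Submodule ℝ (E n)) : Set (E n) := {w | w ∈ V ∧ Complex.I • w ∈ V}

/-- `V` is a CR subspace of `E` if the orthogonal complement in `V` of its maximal
complex subspace `V ∩ JV` is totally real. -/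
def IsCRE (V : Submodule ℝ (E n)) : Prop :=
  ∀ u ∈ V, ∀ v ∈ V, (∀ w ∈ maxCE n V, ⟪u, w⟫ = 0) →
    (∀ w ∈ maxCE n V, ⟪v, w⟫ = 0) → ⟪Complex.I • u, v⟫ = 0

/-- A subset of `𝔰` is totally real if `⟪Ju, v⟫ = 0` for all its elements. -/
def TotallyRealS (V : Set (S n)) : Prop := ∀ u ∈ V, ∀ v ∈ V, sInner n (Js n u) v = 0

/-- The maximal complex subspace `V ∩ JV` of a real subspace `V` of `𝔰`. -/
def maxCS (V : Set (S n)) : Set (S n) := {x | x ∈ V ∧ Js n x ∈ V}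

/-- `V` is a CR subspace of `𝔰` if the orthogonal complement in `V` of its maximal
complex subspace `V ∩ JV` is totally real. -/
def IsCRS (V : Set (S n)) : Prop :=
  ∀ u ∈ V, ∀ v ∈ V, (∀ w ∈ maxCS n V, sInner n u w = 0) →
    (∀ w ∈ maxCS n V, sInner n v w = 0) → sInner n (Js n u) v = 0


lemma inner_I_smul_left' {m : ℕ} (a c : EuclideanSpace ℂ (Fin m)) :
    ⟪Complex.I • a, c⟫ = -⟪a, Complex.I • c⟫ := by
  simp only [PiLp.inner_apply, ← Finset.sum_neg_distrib]
  refine Finset.sum_congr rfl fun i _ => ?_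
  simp [Complex.inner, Complex.mul_re]
  ring

lemma inner_I_I_smul {m : ℕ} (T V : EuclideanSpace ℂ (Fin m)) :
    ⟪Complex.I • (Complex.I • T), V⟫ = -⟪T, V⟫ := by
  rw [smul_smul, Complex.I_mul_I, neg_one_smul, inner_neg_left]

/-- Coefficient sequence for the `Z`-component of `ad^k` on `𝔯`. -/
def dseq (b : ℝ) : ℕ → ℝ
  | 0 => 0
  | k + 1 => b * dseq b k + (b / 2) ^ k

lemma ad_apply (n : ℕ) (b y z : ℝ) (C U : E n) :
    ad n ((b, C, y) : S n) ((0, U, z) : S n)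
      = ((0, (b / 2) • U, b * z + ⟪Complex.I • C, U⟫) : S n) := by
  show bra n _ _ = _
  unfold bra
  refine Prod.ext rfl (Prod.ext ?_ ?_)
  · show (2⁻¹ : ℝ) • (b • U - (0 : ℝ) • C) = (b / 2) • U
    rw [zero_smul, sub_zero, smul_smul]
    congr 1
    ring
  · show b * z - 0 * y + ⟪Complex.I • C, U⟫ = b * z + ⟪Complex.I • C, U⟫
    ring

lemma ad_pow_apply (n : ℕ) (b y c0 : ℝ) (C V : E n)
    (hC : ⟪Complex.I • C, V⟫ = c0) (k : ℕ) :
    ((ad n ((b, C, y) : S n)) ^ k) ((0, V, 0) : S n)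
      = ((0, ((b / 2) ^ k) • V, c0 * dseq b k) : S n) := by
  induction k with
  | zero => simp [dseq]
  | succ k ih =>
      rw [pow_succ', ContinuousLinearMap.mul_apply, ih, ad_apply,
        real_inner_smul_right, hC]
      refine Prod.ext rfl (Prod.ext ?_ ?_)
      · show (b / 2) • ((b / 2) ^ k • V) = ((b / 2) ^ (k + 1)) • V
        rw [smul_smul, ← pow_succ']
      · show b * (c0 * dseq b k) + (b / 2) ^ k * c0 = c0 * (b * dseq b k + (b / 2) ^ k)
        ring

lemma exp_half_hasSum (b : ℝ) :
    HasSum (fun k : ℕ => ((k.factorial : ℝ))⁻¹ * (b / 2) ^ k) (Real.exp (b / 2)) := by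
  rw [Real.exp_eq_exp_ℝ]
  simpa using NormedSpace.exp_series_hasSum_exp' (𝕂 := ℝ) (b / 2)

lemma dseq_hasSum (b : ℝ) :
    HasSum (fun k : ℕ => ((k.factorial : ℝ))⁻¹ * dseq b k) (rho (b / 2) * Real.exp (b / 2)) := by
  rcases eq_or_ne b 0 with rfl | hb
  · have h0 : ∀ k : ℕ, k ≠ 1 → ((k.factorial : ℝ))⁻¹ * dseq 0 k = 0 := by
      intro k hk
      match k, hk with
      | 0, _ => simp [dseq]
      | (j + 2), _ => simp [dseq, zero_pow]
    have h := hasSum_single (f := fun k : ℕ => ((k.factorial : ℝ))⁻¹ * dseq 0 k) 1 h0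
    simpa [dseq, rho] using h
  · have hd : ∀ k : ℕ, dseq b k = (2 / b) * (b ^ k - (b / 2) ^ k) := by
      intro k
      induction k with
      | zero => simp [dseq]
      | succ k ih =>
          rw [dseq, ih]
          field_simp
          ring
    have h1 : HasSum (fun k : ℕ => ((k.factorial : ℝ))⁻¹ * b ^ k) (Real.exp b) := by
      rw [Real.exp_eq_exp_ℝ]
      simpa using NormedSpace.exp_series_hasSum_exp' (𝕂 := ℝ) b
    have h3 := (h1.sub (exp_half_hasSum b)).mul_left (2 / b)
    have hb2 : (b / 2 : ℝ) ≠ 0 := div_ne_zero hb two_ne_zero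
    have he : Real.exp b = Real.exp (b / 2) * Real.exp (b / 2) := by
      rw [← Real.exp_add]; ring_nf
    have hrho : rho (b / 2) * Real.exp (b / 2)
        = 2 / b * (Real.exp b - Real.exp (b / 2)) := by
      rw [rho, if_neg hb2, he]
      field_simp
    have hfun : (fun k : ℕ => ((k.factorial : ℝ))⁻¹ * dseq b k)
        = fun k : ℕ => 2 / b * (((k.factorial : ℝ))⁻¹ * b ^ k - ((k.factorial : ℝ))⁻¹ * (b / 2) ^ k) := by
      funext k; rw [hd]; ring
    rw [hrho, hfun]
    exact h3

lemma expAd_apply (n : ℕ) (b y c0 : ℝ) (C V : E n)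
    (hC : ⟪Complex.I • C, V⟫ = c0) :
    expAd n ((b, C, y) : S n) ((0, V, 0) : S n)
      = ((0, Real.exp (b / 2) • V, c0 * (rho (b / 2) * Real.exp (b / 2))) : S n) := by
  have hs := (NormedSpace.exp_series_hasSum_exp' (𝕂 := ℝ)
    (ad n ((b, C, y) : S n))).mapL (ContinuousLinearMap.apply ℝ (S n) ((0, V, 0) : S n))
  have hfun : (fun k : ℕ => ContinuousLinearMap.apply ℝ (S n) ((0, V, 0) : S n)
        (((k.factorial : ℝ))⁻¹ • (ad n ((b, C, y) : S n)) ^ k))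
      = fun k : ℕ => (((0 : ℝ), (((k.factorial : ℝ))⁻¹ * (b / 2) ^ k) • V,
          c0 * (((k.factorial : ℝ))⁻¹ * dseq b k)) : S n) := by
    funext k
    show ((k.factorial : ℝ))⁻¹ • (((ad n ((b, C, y) : S n)) ^ k) ((0, V, 0) : S n)) = _
    rw [ad_pow_apply n b y c0 C V hC k]
    refine Prod.ext (by simp) (Prod.ext ?_ ?_)
    · show ((k.factorial : ℝ))⁻¹ • ((b / 2) ^ k • V) = _
      rw [smul_smul]
    · show ((k.factorial : ℝ))⁻¹ * (c0 * dseq b k) = c0 * (((k.factorial : ℝ))⁻¹ * dseq b k)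
      ring
  rw [hfun] at hs
  have H : HasSum (fun k : ℕ => (((0 : ℝ), (((k.factorial : ℝ))⁻¹ * (b / 2) ^ k) • V,
        c0 * (((k.factorial : ℝ))⁻¹ * dseq b k)) : S n))
      ((0, Real.exp (b / 2) • V, c0 * (rho (b / 2) * Real.exp (b / 2))) : S n) :=
    hasSum_zero.prodMk (((exp_half_hasSum b).smul_const V).prodMk
      ((dseq_hasSum b).mul_left c0))
  exact hs.unique H

/-- for `𝔯` totally real, `T ∈ 𝔯`, `W ⟂ ℂ𝔯`, `b, y ∈ ℝ`:
`exp(ad(bB+JT+W+yZ))(𝔯) = exp(ad(ρ(b/2)JT))(𝔯)` as subspaces of `𝔰`. -/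
theorem statement8 (n : ℕ) (hn : 2 ≤ n) (𝔯 : Submodule ℝ (E n)) (h𝔯 : TotallyRealE n 𝔯)
    (T : E n) (hT : T ∈ 𝔯) (W : E n)
    (hW : ∀ u ∈ 𝔯, ⟪W, u⟫ = 0 ∧ ⟪W, Complex.I • u⟫ = 0) (b y : ℝ) :
    Submodule.map (expAd n ((b, Complex.I • T + W, y) : S n)).toLinearMap
        (Submodule.map (inE n) 𝔯) =
      Submodule.map (expAd n ((0, rho (b / 2) • (Complex.I • T), 0) : S n)).toLinearMap
        (Submodule.map (inE n) 𝔯) := by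
  have eb_ne : Real.exp (b / 2) ≠ 0 := Real.exp_ne_zero _
  have hC1 : ∀ V ∈ 𝔯, ⟪Complex.I • (Complex.I • T + W), V⟫ = -⟪T, V⟫ := by
    intro V hV
    rw [smul_add, inner_add_left, inner_I_I_smul, inner_I_smul_left', (hW V hV).2]
    ring
  have hL : ∀ V ∈ 𝔯, expAd n ((b, Complex.I • T + W, y) : S n) ((0, V, 0) : S n)
      = ((0, Real.exp (b / 2) • V,
          (-⟪T, V⟫) * (rho (b / 2) * Real.exp (b / 2))) : S n) := by
    intro V hV
    exact expAd_apply n b y (-⟪T, V⟫) _ V (hC1 V hV)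
  have hC2 : ∀ V : E n, ⟪Complex.I • (rho (b / 2) • (Complex.I • T)), V⟫
      = -(rho (b / 2) * ⟪T, V⟫) := by
    intro V
    rw [smul_comm, real_inner_smul_left, inner_I_I_smul]
    ring
  have hR : ∀ V : E n, expAd n ((0, rho (b / 2) • (Complex.I • T), 0) : S n) ((0, V, 0) : S n)
      = ((0, V, -(rho (b / 2) * ⟪T, V⟫)) : S n) := by
    intro V
    rw [expAd_apply n 0 0 (-(rho (b / 2) * ⟪T, V⟫)) _ V (hC2 V)]
    norm_num [rho]
  ext x
  simp only [Submodule.mem_map, ContinuousLinearMap.coe_coe]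
  constructor
  · rintro ⟨u, ⟨V, hV, rfl⟩, rfl⟩
    refine ⟨inE n (Real.exp (b / 2) • V), ⟨_, 𝔯.smul_mem _ hV, rfl⟩, ?_⟩
    show expAd n _ ((0, Real.exp (b / 2) • V, 0) : S n)
      = expAd n _ ((0, V, 0) : S n)
    rw [hR, hL V hV]
    refine Prod.ext rfl (Prod.ext rfl ?_)
    show -(rho (b / 2) * ⟪T, Real.exp (b / 2) • V⟫)
      = (-⟪T, V⟫) * (rho (b / 2) * Real.exp (b / 2))
    rw [real_inner_smul_right]
    ring
  · rintro ⟨u, ⟨V, hV, rfl⟩, rfl⟩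
    refine ⟨inE n ((Real.exp (b / 2))⁻¹ • V), ⟨_, 𝔯.smul_mem _ hV, rfl⟩, ?_⟩
    show expAd n _ ((0, (Real.exp (b / 2))⁻¹ • V, 0) : S n)
      = expAd n _ ((0, V, 0) : S n)
    rw [hL _ (𝔯.smul_mem _ hV), hR]
    refine Prod.ext rfl (Prod.ext ?_ ?_)
    · show Real.exp (b / 2) • ((Real.exp (b / 2))⁻¹ • V) = V
      rw [smul_smul, mul_inv_cancel₀ eb_ne, one_smul]
    · show (-⟪T, (Real.exp (b / 2))⁻¹ • V⟫) * (rho (b / 2) * Real.exp (b / 2))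
        = -(rho (b / 2) * ⟪T, V⟫)
      rw [real_inner_smul_right]
      field_simp

end CHn
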